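/- Let G be a finite simple graph on vertex set {1,…,n}, let K be the clique complex of G, let k ≥ 1 be such that K has at least one k-face, and let Δ_k be its k-th combinatorial Laplacian. Let λ̂ be a real number with λ_max(Δ_k) ≤ λ̂ ≤ n, and set H = I − Δ_k/λ̂. Then the maximum absolute column sum of H satisfies ‖H‖_1 = max_B Σ_A |H_{AB}| ≤ 2n/λ̂, where A, B range over the k-faces of K. -/

import Mathlib

open Matrix

/-- An abstract simplicial complex on vertex set `Fin n`: a family of nonempty finite subsets
closed under taking nonempty subsets. -/
def IsSimplicialComplex {n : ℕ} (K : Finset (Finset (Fin n))) : Prop :=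
  (∀ A ∈ K, A.Nonempty) ∧ ∀ A ∈ K, ∀ B ⊆ A, B.Nonempty → B ∈ K

/-- The faces of `K` of cardinality `c`; the `k`-faces are those of cardinality `k + 1`. -/
def FaceC {n : ℕ} (K : Finset (Finset (Fin n))) (c : ℕ) : Type :=
  {A : Finset (Fin n) // A ∈ K ∧ A.card = c}

instance {n : ℕ} (K : Finset (Finset (Fin n))) (c : ℕ) : Fintype (FaceC K c) := by
  unfold FaceC; infer_instance

instance {n : ℕ} (K : Finset (Finset (Fin n))) (c : ℕ) : DecidableEq (FaceC K c) := by
  unfold FaceC; infer_instance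

/-- The boundary operator `∂` as a matrix sending faces of cardinality `c + 1` to faces of
cardinality `c`: the face obtained by deleting the `ℓ`-th smallest vertex gets sign
`(-1)^(ℓ-1)`. -/
noncomputable def bdry {n : ℕ} (K : Finset (Finset (Fin n))) (c : ℕ) :
    Matrix (FaceC K c) (FaceC K (c + 1)) ℝ :=
  fun B A =>
    if B.1 ⊆ A.1 then
      ∑ v ∈ A.1 \ B.1, (-1 : ℝ) ^ (A.1.filter (fun u => u < v)).card
    else 0

/-- The `k`-th combinatorial Laplacian `Δ_k = ∂_k^T ∂_k + ∂_{k+1} ∂_{k+1}^T`,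
indexed by the `k`-faces (which have cardinality `k + 1`). -/
noncomputable def combLaplacian {n : ℕ} (K : Finset (Finset (Fin n))) (k : ℕ) :
    Matrix (FaceC K (k + 1)) (FaceC K (k + 1)) ℝ :=
  (bdry K k)ᵀ * bdry K k + bdry K (k + 1) * (bdry K (k + 1))ᵀ

/-- The up-degree of a `k`-face `A`: the number of `(k+1)`-faces of `K` containing `A`. -/
def upDegree {n : ℕ} (K : Finset (Finset (Fin n))) (k : ℕ) (A : Finset (Fin n)) : ℕ :=
  (K.filter fun B => A ⊆ B ∧ B.card = k + 2).card

/-- Two distinct `k`-faces are down-up neighbors if their symmetric difference has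
cardinality `2`. -/
def DownUpNbr {n : ℕ} (A B : Finset (Fin n)) : Prop :=
  A ≠ B ∧ ((A \ B) ∪ (B \ A)).card = 2

/-- Down-up neighboring `k`-faces `A`, `B` are additionally up-down neighbors if `A ∪ B`
is a `(k+1)`-face of `K`. -/
def UpDownNbr {n : ℕ} (K : Finset (Finset (Fin n))) (k : ℕ) (A B : Finset (Fin n)) : Prop :=
  DownUpNbr A B ∧ (A ∪ B) ∈ K ∧ (A ∪ B).card = k + 2

/-- The clique complex of a finite simple graph `G` on `{1,…,n}`: the family of nonempty
cliques of `G`. -/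
noncomputable def cliqueComplex {n : ℕ} (G : SimpleGraph (Fin n)) : Finset (Finset (Fin n)) :=
  @Finset.filter _ (fun A => A.Nonempty ∧ G.IsClique (A : Set (Fin n)))
    (Classical.decPred _) Finset.univ

section Aux
open Finset
variable {n : ℕ} {G : SimpleGraph (Fin n)}

lemma mem_cc {A : Finset (Fin n)} :
    A ∈ cliqueComplex G ↔ A.Nonempty ∧ G.IsClique (A : Set (Fin n)) := by
  rw [cliqueComplex, @Finset.mem_filter _ _ (Classical.decPred _)]
  simp

lemma cc_down {A B : Finset (Fin n)} (hA : A ∈ cliqueComplex G) (hBA : B ⊆ A)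
    (hB : B.Nonempty) : B ∈ cliqueComplex G := by
  rw [mem_cc] at hA ⊢
  exact ⟨hB, hA.2.subset (Finset.coe_subset.2 hBA)⟩

noncomputable def eps (A : Finset (Fin n)) (v : Fin n) : ℝ :=
  (-1 : ℝ) ^ (A.filter (fun u => u < v)).card

lemma eps_mul_self (A : Finset (Fin n)) (v : Fin n) : eps A v * eps A v = 1 := by
  rw [eps, ← pow_add]
  exact Even.neg_one_pow (Even.add_self _)

lemma abs_eps (A : Finset (Fin n)) (v : Fin n) : |eps A v| = 1 := by
  rw [eps, abs_pow, abs_neg, abs_one, one_pow]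

lemma exists_sdiff_singleton {C A : Finset (Fin n)} (h : C ⊆ A) (hc : A.card = C.card + 1) :
    ∃ v, v ∉ C ∧ A = insert v C ∧ A \ C = {v} := by
  have h1 : (A \ C).card = 1 := by rw [card_sdiff_of_subset h, hc]; omega
  obtain ⟨v, hv⟩ := Finset.card_eq_one.1 h1
  have hvmem : v ∈ A \ C := hv ▸ Finset.mem_singleton_self v
  refine ⟨v, (Finset.mem_sdiff.1 hvmem).2, ?_, hv⟩
  have h2 : C ∪ (A \ C) = A := Finset.union_sdiff_of_subset h
  rw [← h2, hv, Finset.union_comm, ← Finset.insert_eq]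

lemma bdry_apply_of_sdiff {K : Finset (Finset (Fin n))} {c : ℕ} (C : FaceC K c)
    (A : FaceC K (c + 1)) {v : Fin n} (hsub : C.1 ⊆ A.1) (hv : A.1 \ C.1 = {v}) :
    bdry K c C A = eps A.1 v := by
  rw [bdry, if_pos hsub, hv, Finset.sum_singleton]; rfl

lemma bdry_eq_zero {K : Finset (Finset (Fin n))} {c : ℕ} (C : FaceC K c)
    (A : FaceC K (c + 1)) (h : ¬ C.1 ⊆ A.1) : bdry K c C A = 0 := if_neg h

lemma sum_faceC {K : Finset (Finset (Fin n))} {c : ℕ} (f : Finset (Fin n) → ℝ) :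
    ∑ C : FaceC K c, f C.1
      = ∑ C ∈ (@Finset.filter _ (fun A => A ∈ K ∧ A.card = c)
          (Classical.decPred _) Finset.univ), f C := by
  exact (Finset.sum_subtype _ (fun x => by simp) f).symm

lemma eps_insert_not_lt {C : Finset (Fin n)} {a v : Fin n} (h : ¬ a < v) :
    eps (insert a C) v = eps C v := by
  rw [eps, eps, Finset.filter_insert, if_neg h]

lemma eps_insert_of_lt {C : Finset (Fin n)} {a v : Fin n} (ha : a ∉ C) (h : a < v) :
    eps (insert a C) v = - eps C v := by
  rw [eps, eps, Finset.filter_insert, if_pos h,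
    Finset.card_insert_of_notMem (fun hx => ha (Finset.mem_of_mem_filter _ hx)), pow_succ]
  ring

lemma eps_cancel_lt {C : Finset (Fin n)} {a b : Fin n} (ha : a ∉ C) (hb : b ∉ C) (hab : a < b) :
    eps (insert a C) a * eps (insert b C) b
      + eps (insert a (insert b C)) b * eps (insert a (insert b C)) a = 0 := by
  have h1 : eps (insert a C) a = eps C a := eps_insert_not_lt (lt_irrefl a)
  have h2 : eps (insert a (insert b C)) a = eps C a := by
    rw [eps_insert_not_lt (lt_irrefl a), eps_insert_not_lt (asymm hab)]
  have h3 : eps (insert b C) b = eps C b := eps_insert_not_lt (lt_irrefl b)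
  have h4 : eps (insert a (insert b C)) b = - eps C b := by
    have ha' : a ∉ insert b C := by
      simp only [Finset.mem_insert]; push_neg; exact ⟨hab.ne, ha⟩
    rw [eps_insert_of_lt ha' hab, eps_insert_not_lt (lt_irrefl b)]
  rw [h1, h2, h3, h4]; ring

lemma eps_cancel {C : Finset (Fin n)} {a b : Fin n} (ha : a ∉ C) (hb : b ∉ C) (hab : a ≠ b) :
    eps (insert a C) a * eps (insert b C) b
      + eps (insert a (insert b C)) b * eps (insert a (insert b C)) a = 0 := by
  rcases lt_or_gt_of_ne hab with h | h
  · exact eps_cancel_lt ha hb h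
  · have := eps_cancel_lt hb ha h
    rw [Finset.insert_comm]
    linear_combination this

end Aux


section Diag
variable {n : ℕ} {G : SimpleGraph (Fin n)}

lemma down_diag {k : ℕ} (hk : 1 ≤ k) (B : FaceC (cliqueComplex G) (k + 1)) :
    ((bdry (cliqueComplex G) k)ᵀ * bdry (cliqueComplex G) k) B B = (k : ℝ) + 1 := by
  classical
  rw [Matrix.mul_apply]
  have step : ∀ C : FaceC (cliqueComplex G) k,
      (bdry (cliqueComplex G) k)ᵀ B C * bdry (cliqueComplex G) k C B
        = (fun s => if s ⊆ B.1 then (1 : ℝ) else 0) C.1 := by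
    intro C
    rw [Matrix.transpose_apply]
    by_cases h : C.1 ⊆ B.1
    · obtain ⟨v, -, -, hv⟩ := exists_sdiff_singleton h (by rw [B.2.2, C.2.2])
      simp only [bdry_apply_of_sdiff C B h hv, if_pos h, eps_mul_self]
    · simp only [bdry_eq_zero C B h, if_neg h, zero_mul]
  rw [Finset.sum_congr rfl (fun C _ => step C),
    sum_faceC (fun s => if s ⊆ B.1 then (1 : ℝ) else 0), Finset.sum_boole]
  have hset : (@Finset.filter _ (fun A => A ∈ cliqueComplex G ∧ A.card = k)
        (Classical.decPred _) Finset.univ).filter (fun s => s ⊆ B.1)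
      = B.1.powersetCard k := by
    ext C
    simp only [Finset.mem_filter, Finset.mem_univ, true_and, Finset.mem_powersetCard]
    constructor
    · rintro ⟨⟨-, h2⟩, h3⟩; exact ⟨h3, h2⟩
    · rintro ⟨h1, h2⟩
      refine ⟨⟨cc_down B.2.1 h1 ?_, h2⟩, h1⟩
      rw [← Finset.card_pos, h2]; omega
  rw [hset, Finset.card_powersetCard, B.2.2, Nat.choose_succ_self_right]
  push_cast; ring

lemma up_diag {k : ℕ} (B : FaceC (cliqueComplex G) (k + 1)) :
    (bdry (cliqueComplex G) (k + 1) * (bdry (cliqueComplex G) (k + 1))ᵀ) B B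
      = (upDegree (cliqueComplex G) k B.1 : ℝ) := by
  classical
  rw [Matrix.mul_apply]
  have step : ∀ D : FaceC (cliqueComplex G) (k + 1 + 1),
      bdry (cliqueComplex G) (k + 1) B D * (bdry (cliqueComplex G) (k + 1))ᵀ D B
        = (fun s => if B.1 ⊆ s then (1 : ℝ) else 0) D.1 := by
    intro D
    rw [Matrix.transpose_apply]
    by_cases h : B.1 ⊆ D.1
    · obtain ⟨v, -, -, hv⟩ := exists_sdiff_singleton h (by rw [B.2.2, D.2.2])
      simp only [bdry_apply_of_sdiff B D h hv, if_pos h, eps_mul_self]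
    · simp only [bdry_eq_zero B D h, if_neg h, zero_mul]
  rw [Finset.sum_congr rfl (fun D _ => step D),
    sum_faceC (fun s => if B.1 ⊆ s then (1 : ℝ) else 0), Finset.sum_boole, upDegree]
  norm_cast
  congr 1
  ext s
  simp only [Finset.mem_filter, Finset.mem_univ, true_and]
  constructor
  · rintro ⟨⟨h1, h2⟩, h3⟩; exact ⟨h1, h3, h2⟩
  · rintro ⟨h1, h2, h3⟩; exact ⟨⟨h1, h3⟩, h2⟩

end Diag


section OffDiag
variable {n : ℕ} {G : SimpleGraph (Fin n)}

lemma off_diag {k : ℕ} (hk : 1 ≤ k) (A B : FaceC (cliqueComplex G) (k + 1)) (hAB : A ≠ B) :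
    (|combLaplacian (cliqueComplex G) k A B| = 1 ∧ (A.1 ∩ B.1).card = k ∧
        A.1 ∪ B.1 ∉ cliqueComplex G)
    ∨ combLaplacian (cliqueComplex G) k A B = 0 := by
  classical
  have hAne : A.1 ≠ B.1 := fun h => hAB (Subtype.ext h)
  have hAcard : A.1.card = k + 1 := A.2.2
  have hBcard : B.1.card = k + 1 := B.2.2
  have hint_le : (A.1 ∩ B.1).card ≤ k := by
    by_contra h
    push_neg at h
    have h1 : (A.1 ∩ B.1).card ≤ k + 1 :=
      le_trans (Finset.card_le_card Finset.inter_subset_left) (le_of_eq hAcard)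
    have h2 : A.1 ∩ B.1 = A.1 :=
      Finset.eq_of_subset_of_card_le Finset.inter_subset_left (by omega)
    have h3 : A.1 ⊆ B.1 := by rw [← h2]; exact Finset.inter_subset_right
    exact hAne (Finset.eq_of_subset_of_card_le h3 (by omega))
  by_cases hcard : (A.1 ∩ B.1).card = k
  · have hCK : A.1 ∩ B.1 ∈ cliqueComplex G :=
      cc_down A.2.1 Finset.inter_subset_left (by rw [← Finset.card_pos, hcard]; omega)
    obtain ⟨a, haC, hAins, haD⟩ := exists_sdiff_singleton (C := A.1 ∩ B.1) (A := A.1)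
      Finset.inter_subset_left (by rw [hAcard, hcard])
    obtain ⟨b, hbC, hBins, hbD⟩ := exists_sdiff_singleton (C := A.1 ∩ B.1) (A := B.1)
      Finset.inter_subset_right (by rw [hBcard, hcard])
    have haA : a ∈ A.1 := by rw [hAins]; exact Finset.mem_insert_self a _
    have hbB : b ∈ B.1 := by rw [hBins]; exact Finset.mem_insert_self b _
    have hbA : b ∉ A.1 := fun h => hbC (Finset.mem_inter.2 ⟨h, hbB⟩)
    have hab : a ≠ b := fun h => hbA (h ▸ haA)
    set Cf : FaceC (cliqueComplex G) k := ⟨A.1 ∩ B.1, hCK, hcard⟩ with hCf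
    have hdown : ((bdry (cliqueComplex G) k)ᵀ * bdry (cliqueComplex G) k) A B
        = eps A.1 a * eps B.1 b := by
      rw [Matrix.mul_apply, Finset.sum_eq_single Cf]
      · rw [Matrix.transpose_apply,
          bdry_apply_of_sdiff Cf A Finset.inter_subset_left haD,
          bdry_apply_of_sdiff Cf B Finset.inter_subset_right hbD]
      · intro C _ hC
        rw [Matrix.transpose_apply]
        by_cases h1 : C.1 ⊆ A.1
        · by_cases h2 : C.1 ⊆ B.1
          · exact absurd (Subtype.ext (Finset.eq_of_subset_of_card_le
              (Finset.subset_inter h1 h2) (hcard.trans C.2.2.symm).le)) hC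
          · rw [bdry_eq_zero C B h2, mul_zero]
        · rw [bdry_eq_zero C A h1, zero_mul]
      · exact fun h => absurd (Finset.mem_univ _) h
    have hUcard : (A.1 ∪ B.1).card = k + 1 + 1 := by
      have h := Finset.card_union_add_card_inter A.1 B.1
      rw [hAcard, hBcard, hcard] at h; omega
    have hUnion : A.1 ∪ B.1 = insert a (insert b (A.1 ∩ B.1)) := by
      have h1 : A.1 ∪ B.1 = insert a (A.1 ∩ B.1) ∪ insert b (A.1 ∩ B.1) := by
        rw [← hAins, ← hBins]
      rw [h1, Finset.insert_union, Finset.union_insert, Finset.union_self]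
    have hDb : (A.1 ∪ B.1) \ A.1 = {b} := by
      have h1 : (A.1 ∪ B.1) \ A.1 = B.1 \ A.1 := by
        ext x; simp only [Finset.mem_sdiff, Finset.mem_union]; tauto
      have h2 : B.1 \ (A.1 ∩ B.1) = B.1 \ A.1 := by
        rw [Finset.inter_comm, Finset.sdiff_inter_self_left]
      rw [h1, ← h2, hbD]
    have hDa : (A.1 ∪ B.1) \ B.1 = {a} := by
      have h1 : (A.1 ∪ B.1) \ B.1 = A.1 \ B.1 := by
        ext x; simp only [Finset.mem_sdiff, Finset.mem_union]; tauto
      have h2 : A.1 \ (A.1 ∩ B.1) = A.1 \ B.1 := Finset.sdiff_inter_self_left A.1 B.1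
      rw [h1, ← h2, haD]
    by_cases hU : A.1 ∪ B.1 ∈ cliqueComplex G
    · right
      set Df : FaceC (cliqueComplex G) (k + 1 + 1) := ⟨A.1 ∪ B.1, hU, hUcard⟩ with hDf
      have hup : (bdry (cliqueComplex G) (k + 1) * (bdry (cliqueComplex G) (k + 1))ᵀ) A B
          = eps (A.1 ∪ B.1) b * eps (A.1 ∪ B.1) a := by
        rw [Matrix.mul_apply, Finset.sum_eq_single Df]
        · rw [Matrix.transpose_apply,
            bdry_apply_of_sdiff A Df Finset.subset_union_left hDb,
            bdry_apply_of_sdiff B Df Finset.subset_union_right hDa]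
        · intro D _ hD
          rw [Matrix.transpose_apply]
          by_cases h1 : A.1 ⊆ D.1
          · by_cases h2 : B.1 ⊆ D.1
            · exact absurd (Subtype.ext (Finset.eq_of_subset_of_card_le
                (Finset.union_subset h1 h2) (D.2.2.trans hUcard.symm).le).symm) hD
            · rw [bdry_eq_zero B D h2, mul_zero]
          · rw [bdry_eq_zero A D h1, zero_mul]
        · exact fun h => absurd (Finset.mem_univ _) h
      have hkey := eps_cancel haC hbC hab
      rw [← hUnion, ← hAins, ← hBins] at hkey
      rw [combLaplacian, Matrix.add_apply, hdown, hup]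
      exact hkey
    · left
      have hup0 : (bdry (cliqueComplex G) (k + 1) * (bdry (cliqueComplex G) (k + 1))ᵀ) A B
          = 0 := by
        rw [Matrix.mul_apply]
        apply Finset.sum_eq_zero
        intro D _
        rw [Matrix.transpose_apply]
        by_cases h1 : A.1 ⊆ D.1
        · by_cases h2 : B.1 ⊆ D.1
          · exfalso
            apply hU
            have heq : A.1 ∪ B.1 = D.1 := Finset.eq_of_subset_of_card_le
              (Finset.union_subset h1 h2) (D.2.2.trans hUcard.symm).le
            rw [heq]; exact D.2.1
          · rw [bdry_eq_zero B D h2, mul_zero]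
        · rw [bdry_eq_zero A D h1, zero_mul]
      refine ⟨?_, hcard, hU⟩
      rw [combLaplacian, Matrix.add_apply, hdown, hup0, add_zero, abs_mul, abs_eps, abs_eps,
        mul_one]
  · right
    have hlt : (A.1 ∩ B.1).card < k := lt_of_le_of_ne hint_le hcard
    have hdown0 : ((bdry (cliqueComplex G) k)ᵀ * bdry (cliqueComplex G) k) A B = 0 := by
      rw [Matrix.mul_apply]
      apply Finset.sum_eq_zero
      intro C _
      rw [Matrix.transpose_apply]
      by_cases h1 : C.1 ⊆ A.1
      · by_cases h2 : C.1 ⊆ B.1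
        · exfalso
          have h3 := Finset.card_le_card (Finset.subset_inter h1 h2)
          rw [C.2.2] at h3; omega
        · rw [bdry_eq_zero C B h2, mul_zero]
      · rw [bdry_eq_zero C A h1, zero_mul]
    have hup0 : (bdry (cliqueComplex G) (k + 1) * (bdry (cliqueComplex G) (k + 1))ᵀ) A B
        = 0 := by
      rw [Matrix.mul_apply]
      apply Finset.sum_eq_zero
      intro D _
      rw [Matrix.transpose_apply]
      by_cases h1 : A.1 ⊆ D.1
      · by_cases h2 : B.1 ⊆ D.1
        · exfalso
          have hsub := Finset.card_le_card (Finset.union_subset h1 h2)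
          have hu := Finset.card_union_add_card_inter A.1 B.1
          rw [hAcard, hBcard] at hu
          rw [D.2.2] at hsub
          omega
        · rw [bdry_eq_zero B D h2, mul_zero]
      · rw [bdry_eq_zero A D h1, zero_mul]
    rw [combLaplacian, Matrix.add_apply, hdown0, hup0, add_zero]

end OffDiag


noncomputable def badSet {n : ℕ} (G : SimpleGraph (Fin n)) (k : ℕ)
    (B : FaceC (cliqueComplex G) (k + 1)) : Finset (FaceC (cliqueComplex G) (k + 1)) :=
  @Finset.filter _ (fun A => A ≠ B ∧ (A.1 ∩ B.1).card = k ∧ A.1 ∪ B.1 ∉ cliqueComplex G)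
    (Classical.decPred _) Finset.univ

section Count
variable {n : ℕ} {G : SimpleGraph (Fin n)}

lemma mem_badSet {k : ℕ} {B A : FaceC (cliqueComplex G) (k + 1)} :
    A ∈ badSet G k B ↔
      A ≠ B ∧ (A.1 ∩ B.1).card = k ∧ A.1 ∪ B.1 ∉ cliqueComplex G := by
  rw [badSet, @Finset.mem_filter _ _ (Classical.decPred _)]
  simp

lemma bad_sdiff_card {k : ℕ} {B A : FaceC (cliqueComplex G) (k + 1)}
    (hA : A ∈ badSet G k B) : ∃ u, A.1 \ B.1 = {u} := by
  obtain ⟨-, h2, -⟩ := mem_badSet.1 hA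
  have h3 := Finset.card_inter_add_card_sdiff A.1 B.1
  rw [Finset.card_eq_one.symm]
  rw [A.2.2, h2] at h3
  omega

lemma bad_union {k : ℕ} {B A : FaceC (cliqueComplex G) (k + 1)} {u : Fin n}
    (hu : A.1 \ B.1 = {u}) : A.1 ∪ B.1 = insert u B.1 := by
  ext x
  have h1 : x ∈ A.1 \ B.1 ↔ x = u := by rw [hu]; simp
  rw [Finset.mem_sdiff] at h1
  simp only [Finset.mem_union, Finset.mem_insert]
  by_cases hx : x ∈ B.1 <;> tauto

/-- If two distinct bad faces share the same outside vertex, we get a contradiction. -/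
lemma bad_inj {k : ℕ} {B A₁ A₂ : FaceC (cliqueComplex G) (k + 1)} {u : Fin n}
    (h1 : A₁ ∈ badSet G k B) (h2 : A₂ ∈ badSet G k B)
    (hu1 : A₁.1 \ B.1 = {u}) (hu2 : A₂.1 \ B.1 = {u}) : A₁ = A₂ := by
  classical
  -- structure of Aᵢ : Aᵢ = (B \ {vᵢ}) ∪ {u}
  have struct : ∀ (A : FaceC (cliqueComplex G) (k + 1)), A ∈ badSet G k B →
      A.1 \ B.1 = {u} → ∃ v, v ∈ B.1 ∧ A.1 = (B.1 \ {v}) ∪ {u} ∧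
        ∀ y ∈ B.1, y ≠ v → y ∈ A.1 := by
    intro A hA hu
    obtain ⟨-, hcard, -⟩ := mem_badSet.1 hA
    have hsub : A.1 ∩ B.1 ⊆ B.1 := Finset.inter_subset_right
    have hc1 : (B.1 \ (A.1 ∩ B.1)).card = 1 := by
      rw [Finset.card_sdiff_of_subset hsub, B.2.2, hcard]; omega
    obtain ⟨v, hv⟩ := Finset.card_eq_one.1 hc1
    have hvB : v ∈ B.1 := by
      have : v ∈ B.1 \ (A.1 ∩ B.1) := by rw [hv]; simp
      exact (Finset.mem_sdiff.1 this).1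
    have hinter : A.1 ∩ B.1 = B.1 \ {v} := by
      rw [← hv, Finset.sdiff_sdiff_eq_self hsub]
    have hdecomp : A.1 = (A.1 ∩ B.1) ∪ (A.1 \ B.1) := by
      ext x
      simp only [Finset.mem_union, Finset.mem_inter, Finset.mem_sdiff]
      by_cases hx : x ∈ B.1 <;> tauto
    refine ⟨v, hvB, ?_, ?_⟩
    · rw [hdecomp, hinter, hu]
    · intro y hy hyv
      have : y ∈ A.1 ∩ B.1 := by
        rw [hinter, Finset.mem_sdiff, Finset.mem_singleton]
        exact ⟨hy, hyv⟩
      exact (Finset.mem_inter.1 this).1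
  obtain ⟨v₁, hv₁B, hA₁eq, hmem₁⟩ := struct A₁ h1 hu1
  obtain ⟨v₂, hv₂B, hA₂eq, hmem₂⟩ := struct A₂ h2 hu2
  by_cases hv : v₁ = v₂
  · exact Subtype.ext (by rw [hA₁eq, hA₂eq, hv])
  · -- clique argument: insert u B is a clique, contradiction with badness of A₁
    exfalso
    have huB : u ∉ B.1 := by
      have : u ∈ A₁.1 \ B.1 := by rw [hu1]; simp
      exact (Finset.mem_sdiff.1 this).2
    have hu1A : u ∈ A₁.1 := by
      have : u ∈ A₁.1 \ B.1 := by rw [hu1]; simp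
      exact (Finset.mem_sdiff.1 this).1
    have hu2A : u ∈ A₂.1 := by
      have : u ∈ A₂.1 \ B.1 := by rw [hu2]; simp
      exact (Finset.mem_sdiff.1 this).1
    have hcl1 : G.IsClique (A₁.1 : Set (Fin n)) := (mem_cc.1 A₁.2.1).2
    have hcl2 : G.IsClique (A₂.1 : Set (Fin n)) := (mem_cc.1 A₂.2.1).2
    have hclB : G.IsClique (B.1 : Set (Fin n)) := (mem_cc.1 B.2.1).2
    have adj : ∀ y ∈ B.1, y ≠ u → G.Adj u y := by
      intro y hy hyu
      rcases eq_or_ne y v₁ with rfl | hne1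
      · -- y = v₁ ≠ v₂, so y ∈ A₂
        have hyA₂ : y ∈ A₂.1 := hmem₂ y hy hv
        exact hcl2 (Finset.mem_coe.2 hu2A) (Finset.mem_coe.2 hyA₂) (Ne.symm hyu)
      · have hyA₁ : y ∈ A₁.1 := hmem₁ y hy hne1
        exact hcl1 (Finset.mem_coe.2 hu1A) (Finset.mem_coe.2 hyA₁) (Ne.symm hyu)
    have hclique : G.IsClique ((insert u B.1 : Finset (Fin n)) : Set (Fin n)) := by
      intro x hx y hy hxy
      simp only [Finset.coe_insert, Set.mem_insert_iff, Finset.mem_coe] at hx hy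
      rcases hx with rfl | hxB
      · rcases hy with rfl | hyB
        · exact absurd rfl hxy
        · exact adj y hyB (Ne.symm hxy)
      · rcases hy with rfl | hyB
        · exact (adj x hxB hxy).symm
        · exact hclB (Finset.mem_coe.2 hxB) (Finset.mem_coe.2 hyB) hxy
    have hmem : insert u B.1 ∈ cliqueComplex G :=
      mem_cc.2 ⟨Finset.insert_nonempty _ _, hclique⟩
    obtain ⟨-, -, hbad⟩ := mem_badSet.1 h1
    rw [bad_union hu1] at hbad
    exact hbad hmem

lemma count_bad {k : ℕ} (hk : 1 ≤ k) (B : FaceC (cliqueComplex G) (k + 1)) :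
    (badSet G k B).card + upDegree (cliqueComplex G) k B.1 + (k + 1) ≤ n := by
  classical
  set upSet : Finset (Finset (Fin n)) :=
    (cliqueComplex G).filter (fun D => B.1 ⊆ D ∧ D.card = k + 2) with hupSet
  have hup_mem : ∀ D, D ∈ upSet ↔ D ∈ cliqueComplex G ∧ B.1 ⊆ D ∧ D.card = k + 2 := by
    intro D; rw [hupSet, Finset.mem_filter]
  have hup_sdiff : ∀ D ∈ upSet, ∃ u, D \ B.1 = {u} := by
    intro D hD
    obtain ⟨hDK, hBD, hDc⟩ := (hup_mem D).1 hD
    rw [← Finset.card_eq_one, Finset.card_sdiff_of_subset hBD, hDc, B.2.2]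
    omega
  have hup_eq : ∀ D ∈ upSet, D = B.1 ∪ (D \ B.1) := fun D hD =>
    (Finset.union_sdiff_of_subset ((hup_mem D).1 hD).2.1).symm
  have hupDeg : upDegree (cliqueComplex G) k B.1 = upSet.card := by
    rw [upDegree, hupSet]
  set S1 := (badSet G k B).image (fun A : FaceC (cliqueComplex G) (k + 1) => A.1 \ B.1)
    with hS1
  set S2 := upSet.image (fun D => D \ B.1) with hS2
  have hcard1 : S1.card = (badSet G k B).card := by
    rw [hS1]
    apply Finset.card_image_of_injOn
    intro A₁ hA₁ A₂ hA₂ hEq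
    obtain ⟨u, hu⟩ := bad_sdiff_card hA₁
    exact bad_inj hA₁ hA₂ hu (hEq.symm.trans hu)
  have hcard2 : S2.card = upSet.card := by
    rw [hS2]
    apply Finset.card_image_of_injOn
    intro D₁ h₁ D₂ h₂ hEq
    have hEq2 : D₁ \ B.1 = D₂ \ B.1 := hEq
    rw [hup_eq D₁ h₁, hup_eq D₂ h₂, hEq2]
  have hdisj : Disjoint S1 S2 := by
    rw [Finset.disjoint_left]
    intro s hs1 hs2
    simp only [hS1, hS2, Finset.mem_image] at hs1 hs2
    obtain ⟨A, hA, rfl⟩ := hs1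
    obtain ⟨D, hD, hgd⟩ := hs2
    obtain ⟨u, hu⟩ := bad_sdiff_card hA
    have hDu : D \ B.1 = {u} := hgd.trans hu
    have hDeq : D = insert u B.1 := by
      rw [hup_eq D hD, hDu, Finset.union_comm, ← Finset.insert_eq]
    obtain ⟨-, -, hbad⟩ := mem_badSet.1 hA
    rw [bad_union hu] at hbad
    apply hbad
    rw [← hDeq]
    exact ((hup_mem D).1 hD).1
  have hsub12 : S1 ∪ S2 ⊆ (B.1ᶜ).powersetCard 1 := by
    intro s hs
    rw [Finset.mem_powersetCard]
    rcases Finset.mem_union.1 hs with hs | hs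
    · simp only [hS1, Finset.mem_image] at hs
      obtain ⟨A, hA, rfl⟩ := hs
      obtain ⟨u, hu⟩ := bad_sdiff_card hA
      refine ⟨fun x hx => Finset.mem_compl.2 (Finset.mem_sdiff.1 hx).2, ?_⟩
      rw [hu]; simp
    · simp only [hS2, Finset.mem_image] at hs
      obtain ⟨D, hD, rfl⟩ := hs
      obtain ⟨u, hu⟩ := hup_sdiff D hD
      refine ⟨fun x hx => Finset.mem_compl.2 (Finset.mem_sdiff.1 hx).2, ?_⟩
      rw [hu]; simp
  have hle := Finset.card_le_card hsub12
  rw [Finset.card_union_of_disjoint hdisj, hcard1, hcard2,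
    Finset.card_powersetCard, Finset.card_compl, Fintype.card_fin, B.2.2,
    Nat.choose_one_right] at hle
  have hBn : k + 1 ≤ n := by
    have h := Finset.card_le_univ B.1
    rwa [B.2.2, Fintype.card_fin] at h
  omega

end Count


/-- For the clique complex `K` of a graph `G` on `{1,…,n}`, `k ≥ 1` such that `K` has a
`k`-face, and a real `λ̂` with `λ_max(Δ_k) ≤ λ̂ ≤ n`, the matrix `H = I - Δ_k/λ̂` has maximum
absolute column sum `‖H‖_1 = max_B Σ_A |H_{AB}| ≤ 2n/λ̂`. -/
theorem clique_column_sum_bound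
    {n k : ℕ} (G : SimpleGraph (Fin n)) (hk : 1 ≤ k)
    (hne : Nonempty (FaceC (cliqueComplex G) (k + 1)))
    (lam : ℝ) (hΔ : (combLaplacian (cliqueComplex G) k).IsHermitian)
    (hlam₁ : (⨆ i, hΔ.eigenvalues i) ≤ lam) (hlam₂ : lam ≤ (n : ℝ)) :
    ∀ B : FaceC (cliqueComplex G) (k + 1),
      ∑ A : FaceC (cliqueComplex G) (k + 1),
          |((1 : Matrix (FaceC (cliqueComplex G) (k + 1)) (FaceC (cliqueComplex G) (k + 1)) ℝ)
              - lam⁻¹ • combLaplacian (cliqueComplex G) k) A B| ≤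
        2 * n / lam := by
  classical
  intro B
  haveI := hne
  have hdiag : ∀ B' : FaceC (cliqueComplex G) (k + 1),
      combLaplacian (cliqueComplex G) k B' B'
        = ((k : ℝ) + 1) + (upDegree (cliqueComplex G) k B'.1 : ℝ) := by
    intro B'
    rw [combLaplacian, Matrix.add_apply, down_diag hk B', up_diag B']
  have htrace : (combLaplacian (cliqueComplex G) k).trace = ∑ i, hΔ.eigenvalues i := by
    nth_rewrite 1 [hΔ.spectral_theorem]
    rw [Unitary.conjStarAlgAut_apply, Matrix.trace_mul_cycle,
      (Matrix.mem_unitaryGroup_iff').mp (Matrix.IsHermitian.eigenvectorUnitary hΔ).2,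
      Matrix.one_mul, Matrix.trace_diagonal]
    simp
  have hex : ∃ i, (2 : ℝ) ≤ hΔ.eigenvalues i := by
    have h2 : ∑ _i : FaceC (cliqueComplex G) (k + 1), (2 : ℝ) ≤ ∑ i, hΔ.eigenvalues i := by
      rw [← htrace, Matrix.trace]
      apply Finset.sum_le_sum
      intro i _
      rw [Matrix.diag_apply, hdiag i]
      have h1 : (1 : ℝ) ≤ (k : ℝ) := by exact_mod_cast hk
      have h2 : (0 : ℝ) ≤ (upDegree (cliqueComplex G) k i.1 : ℝ) := Nat.cast_nonneg _
      linarith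
    by_contra hcon
    push_neg at hcon
    have h3 : ∑ i, hΔ.eigenvalues i < ∑ _i : FaceC (cliqueComplex G) (k + 1), (2 : ℝ) :=
      Finset.sum_lt_sum_of_nonempty Finset.univ_nonempty (fun i _ => hcon i)
    linarith
  obtain ⟨i0, hi0⟩ := hex
  have hlam2 : (2 : ℝ) ≤ lam :=
    le_trans hi0 (le_trans (le_ciSup (Set.Finite.bddAbove (Set.finite_range _)) i0) hlam₁)
  have hpos : (0 : ℝ) < lam := by linarith
  have hinv : (0 : ℝ) < lam⁻¹ := inv_pos.2 hpos
  rw [← Finset.sum_erase_add _ _ (Finset.mem_univ B)]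
  have hcount : ((badSet G k B).card : ℝ) + (upDegree (cliqueComplex G) k B.1 : ℝ) + ((k : ℝ) + 1)
      ≤ (n : ℝ) := by
    have h := count_bad hk B
    push_cast
    exact_mod_cast h
  have hBB : |((1 : Matrix (FaceC (cliqueComplex G) (k + 1)) (FaceC (cliqueComplex G) (k + 1)) ℝ)
        - lam⁻¹ • combLaplacian (cliqueComplex G) k) B B|
      = |1 - lam⁻¹ * (((k : ℝ) + 1) + (upDegree (cliqueComplex G) k B.1 : ℝ))| := by
    rw [Matrix.sub_apply, Matrix.smul_apply, Matrix.one_apply_eq, hdiag B, smul_eq_mul]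
  have hoff : ∑ A ∈ Finset.univ.erase B,
      |((1 : Matrix (FaceC (cliqueComplex G) (k + 1)) (FaceC (cliqueComplex G) (k + 1)) ℝ)
          - lam⁻¹ • combLaplacian (cliqueComplex G) k) A B|
      ≤ lam⁻¹ * ((badSet G k B).card : ℝ) := by
    have hterm : ∀ A ∈ Finset.univ.erase B,
        |((1 : Matrix (FaceC (cliqueComplex G) (k + 1)) (FaceC (cliqueComplex G) (k + 1)) ℝ)
            - lam⁻¹ • combLaplacian (cliqueComplex G) k) A B|
          ≤ lam⁻¹ * (if A ∈ badSet G k B then (1 : ℝ) else 0) := by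
      intro A hA
      have hAB : A ≠ B := Finset.ne_of_mem_erase hA
      rw [Matrix.sub_apply, Matrix.smul_apply, Matrix.one_apply_ne hAB, smul_eq_mul,
        zero_sub, abs_neg, abs_mul, abs_of_pos hinv]
      rcases off_diag hk A B hAB with ⟨h1, h2, h3⟩ | h0
      · rw [if_pos (mem_badSet.2 ⟨hAB, h2, h3⟩), h1]
      · rw [h0, abs_zero, mul_zero]
        split_ifs
        · positivity
        · rw [mul_zero]
    refine le_trans (Finset.sum_le_sum hterm) ?_
    rw [← Finset.mul_sum, Finset.sum_boole]
    have hfe : (Finset.univ.erase B).filter (fun A => A ∈ badSet G k B) = badSet G k B := by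
      ext A
      simp only [Finset.mem_filter, Finset.mem_erase, Finset.mem_univ, and_true, true_and]
      exact ⟨fun h => h.2, fun h => ⟨(mem_badSet.1 h).1, h⟩⟩
    rw [hfe]
  refine le_trans (add_le_add hoff (le_of_eq hBB)) ?_
  have e1 : lam⁻¹ * lam = 1 := inv_mul_cancel₀ (ne_of_gt hpos)
  have e2 := mul_le_mul_of_nonneg_left hcount (le_of_lt hinv)
  have e3 := mul_le_mul_of_nonneg_left hlam₂ (le_of_lt hinv)
  have hmnn : (0 : ℝ) ≤ ((badSet G k B).card : ℝ) := Nat.cast_nonneg _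
  have hdnn : (0 : ℝ) ≤ (upDegree (cliqueComplex G) k B.1 : ℝ) := Nat.cast_nonneg _
  have hknn : (0 : ℝ) ≤ (k : ℝ) := Nat.cast_nonneg _
  have hnnn : (0 : ℝ) ≤ (n : ℝ) := Nat.cast_nonneg _
  rw [div_eq_mul_inv]
  rcases abs_cases (1 - lam⁻¹ * (((k : ℝ) + 1) + (upDegree (cliqueComplex G) k B.1 : ℝ)))
    with ⟨habs, -⟩ | ⟨habs, -⟩ <;> rw [habs] <;> nlinarith [e1, e2, e3]
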